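/- arXiv:1612.07638 — 3 statements merged into one kernel-verified Lean document; each statement's English description precedes it below -/
import Mathlib

section
/- Let (R,m) be a Noetherian local ring and M a finitely generated R-module of dimension d > 0, and let U_M(0) denote its unmixed component, i.e., the largest submodule of M of dimension strictly less than d. If x is a parameter element of M contained in Ann(U_M(0)), then U_M(0) = 0 :_M x. -/
open Submodule IsLocalRing Classical CategoryTheory

section Defs

variable (R : Type) [CommRing R]

/-- Krull dimension of a module: `dim (R / Ann M)`. -/
noncomputable def moduleDim (M : Type) [AddCommGroup M] [Module R M] : WithBot ℕ∞ :=
  ringKrullDim (R ⧸ Module.annihilator R M)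

/-- Length of a module, as the Krull dimension of its lattice of submodules
(read as `0` if the module is zero or not of finite length). -/
noncomputable def flen (M : Type) [AddCommGroup M] [Module R M] : ℕ :=
  (WithBot.unbotD 0 (Order.krullDim (Submodule R M))).toNat

/-- Krull dimension of a module, as a natural number. -/
noncomputable def dimnat (N : Type) [AddCommGroup N] [Module R N] : ℕ :=
  (WithBot.unbotD 0 (moduleDim R N)).toNat

variable {R}

/-- A system of parameters of `M`: `d` elements of the maximal ideal such that the quotient
of `M` by the submodule they generate has dimension `≤ 0` (i.e. finite length). -/
def IsSOP [IsLocalRing R] {d : ℕ} (M : Type) [AddCommGroup M] [Module R M]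
    (x : Fin d → R) : Prop :=
  (∀ i, x i ∈ maximalIdeal R) ∧
    moduleDim R (M ⧸ (Ideal.span (Set.range x) • ⊤ : Submodule R M)) ≤ 0

variable (R)

/-- The ideal `b(M)`: the intersection, over all systems of parameters `x₁, …, x_d` of `M`
and all `i ≤ d`, of the annihilators of `((x₁,…,x_{i-1})M : x_i)/(x₁,…,x_{i-1})M`. -/
noncomputable def bIdeal [IsLocalRing R] (M : Type) [AddCommGroup M] [Module R M]
    (d : ℕ) : Ideal R :=
  ⨅ (x : Fin d → R) (_ : IsSOP M x) (i : Fin d),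
    Module.annihilator R
      ↥(LinearMap.ker (LinearMap.lsmul R
        (M ⧸ (Ideal.span (x '' {j | j < i}) • ⊤ : Submodule R M)) (x i)))

variable {R}

/-- A parameter element of the `d`-dimensional module `M`:
an element of the maximal ideal with `dim M/xM = d - 1`. -/
def IsParamElt [IsLocalRing R] (d : ℕ) (M : Type) [AddCommGroup M] [Module R M]
    (x : R) : Prop :=
  x ∈ maximalIdeal R ∧
    moduleDim R (M ⧸ (Ideal.span {x} • ⊤ : Submodule R M)) = ((d - 1 : ℕ) : WithBot ℕ∞)

/-- `U` is the unmixed component `U_M(0)` of the `d`-dimensional module `M`: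
the largest submodule of dimension `< d`. -/
def IsUnmixedComponent (d : ℕ) {M : Type} [AddCommGroup M] [Module R M]
    (U : Submodule R M) : Prop :=
  moduleDim R ↥U < (d : WithBot ℕ∞) ∧
    ∀ N : Submodule R M, moduleDim R ↥N < (d : WithBot ℕ∞) → N ≤ U

/-- The depth of a module over a local ring: the supremum of lengths of regular sequences
contained in the maximal ideal. -/
noncomputable def moduleDepth (S : Type) [CommRing S] [IsLocalRing S]
    (N : Type) [AddCommGroup N] [Module S N] : ℕ∞ :=
  ⨆ (rs : List S) (_ : ∀ r ∈ rs, r ∈ maximalIdeal S)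
    (_ : RingTheory.Sequence.IsRegular N rs), (rs.length : ℕ∞)

/-- A witness that `R` is a homomorphic image of a Cohen–Macaulay Noetherian local ring. -/
structure CMQuotientWitness (R : Type) [CommRing R] where
  S : Type
  [commRing : CommRing S]
  [localRing : IsLocalRing S]
  noetherian : IsNoetherianRing S
  depth_eq_dim : (moduleDepth S S : WithBot ℕ∞) = moduleDim S S
  f : S →+* R
  surjective : Function.Surjective f

variable (R)

/-- The Hilbert–Samuel multiplicity `e₀(I, M)` of a `d`-dimensional module `M`, characterized by
`ℓ(M/I^{n+1}M) · d! / n^d → e₀(I, M)`. -/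
noncomputable def mult (I : Ideal R) (M : Type) [AddCommGroup M] [Module R M]
    (d : ℕ) : ℕ :=
  if h : ∃ e : ℕ, Filter.Tendsto
      (fun n : ℕ =>
        (flen R (M ⧸ ((I ^ (n + 1)) • ⊤ : Submodule R M)) : ℝ) * (Nat.factorial d) / ((n : ℝ) ^ d))
      Filter.atTop (nhds (e : ℝ))
  then h.choose else 0

/-- `x` is a superficial element of `M` with respect to `I`. -/
def IsSuperficial [IsLocalRing R] (I : Ideal R) (M : Type) [AddCommGroup M] [Module R M]
    (x : R) : Prop :=
  x ∈ I ∧ x ∉ maximalIdeal R * I ∧ ∃ c : ℕ, ∀ n ≥ c,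
    (Submodule.comap (LinearMap.lsmul R M x) ((I ^ (n + 1)) • ⊤) ⊓ ((I ^ c) • ⊤)
      : Submodule R M) = (I ^ n) • ⊤

/-- `ℓ_{R_p}(H⁰_{pR_p}(M_p))`: the length over `R_p` of the `pR_p`-torsion of `M_p`. -/
noncomputable def locLenH0 (p : Ideal R) (M : Type) [AddCommGroup M] [Module R M] : ℕ :=
  if hp : p.IsPrime then
    letI := hp
    flen (Localization.AtPrime p)
      ↥(⨆ k : ℕ, Submodule.torsionBySet (Localization.AtPrime p)
          (LocalizedModule p.primeCompl M)
          ((Ideal.map (algebraMap R (Localization.AtPrime p)) p ^ k : Ideal _) : Set _))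
  else 0

/-- `ℓ_{R_p}(M_p)`: the length of the localization of `M` at `p` over `R_p`. -/
noncomputable def locLen (p : Ideal R) (M : Type) [AddCommGroup M] [Module R M] : ℕ :=
  if hp : p.IsPrime then
    letI := hp
    flen (Localization.AtPrime p) (LocalizedModule p.primeCompl M)
  else 0

/-- The arithmetic degree `adeg(I, M) = Σ_{p ∈ Ass M} ℓ_{R_p}(H⁰_{pR_p}(M_p)) · e₀(I, R/p)`. -/
noncomputable def adeg (I : Ideal R) (M : Type) [AddCommGroup M] [Module R M] : ℕ :=
  ∑ᶠ p ∈ associatedPrimes R M, locLenH0 R p M * mult R I (R ⧸ p) (dimnat R (R ⧸ p))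

variable {R}

/-- An `I`-filter regular sequence on `M`. -/
def IsFilterRegularSeq (I : Ideal R) (M : Type) [AddCommGroup M] [Module R M]
    {t : ℕ} (x : Fin t → R) : Prop :=
  (∀ i, x i ∈ I) ∧ ∀ i : Fin t,
    Module.support R ↥(LinearMap.ker (LinearMap.lsmul R
      (M ⧸ (Ideal.span (x '' {j | j < i}) • ⊤ : Submodule R M)) (x i)))
      ⊆ PrimeSpectrum.zeroLocus (I : Set R)

end Defs


/-- Cayley–Hamilton consequence: `Ann(M/IM) ≤ √(I + Ann M)` for finite `M`. -/
lemma ann_quot_le_radical {R M : Type} [CommRing R] [AddCommGroup M] [Module R M]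
    [Module.Finite R M] (I : Ideal R) :
    Module.annihilator R (M ⧸ (I • ⊤ : Submodule R M)) ≤
      (I ⊔ Module.annihilator R M).radical := by
  intro a ha
  have hrange : LinearMap.range (algebraMap R (Module.End R M) a) ≤ I • ⊤ := by
    rintro _ ⟨m, rfl⟩
    have := Module.mem_annihilator.mp ha (Submodule.Quotient.mk m)
    rw [← Submodule.Quotient.mk_smul, Submodule.Quotient.mk_eq_zero] at this
    simpa [Module.algebraMap_end_apply] using this
  obtain ⟨p, hmonic, -, hcoeff, heval⟩ :=
    LinearMap.exists_monic_and_coeff_mem_pow_and_aeval_eq_zero_of_range_le_smul (R := R) (M := M)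
      (algebraMap R (Module.End R M) a) I hrange
  rw [Polynomial.aeval_algebraMap_apply] at heval
  have hann : (Polynomial.aeval a p : R) ∈ Module.annihilator R M := by
    rw [Module.mem_annihilator]
    intro m
    have := congrArg (fun g : Module.End R M => g m) heval
    simpa [Module.algebraMap_end_apply] using this
  refine ⟨p.natDegree, ?_⟩
  have heq : a ^ p.natDegree =
      (Polynomial.aeval a p : R) -
        ∑ i ∈ Finset.range p.natDegree, p.coeff i * a ^ i := by
    have : (Polynomial.aeval a p : R) = p.eval a := by
      simp [Polynomial.aeval_def, Polynomial.eval, Polynomial.eval₂_eq_sum]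
    rw [this, Polynomial.eval_eq_sum_range, Finset.sum_range_succ,
      hmonic.coeff_natDegree, one_mul]
    ring
  rw [heq]
  refine sub_mem (le_sup_right (α := Ideal R) hann) (Ideal.sum_mem _ fun i hi => ?_)
  have hIi : p.coeff i ∈ I := by
    exact Ideal.pow_le_self (Nat.sub_ne_zero_of_lt (Finset.mem_range.mp hi)) (hcoeff i)
  exact le_sup_left (α := Ideal R) (Ideal.mul_mem_right _ _ hIi)


lemma ringKrullDim_quot_le_quot_of_le_radical {R : Type} [CommRing R] {I J : Ideal R}
    (h : I ≤ J.radical) :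
    ringKrullDim (R ⧸ J) ≤ ringKrullDim (R ⧸ I) := by
  have key : ∀ p : PrimeSpectrum (R ⧸ J),
      ((p.asIdeal.comap (Ideal.Quotient.mk J)).map (Ideal.Quotient.mk I)).IsPrime := by
    intro p
    have hJ : J ≤ p.asIdeal.comap (Ideal.Quotient.mk J) := by
      intro r hr
      simp [Ideal.mem_comap, Ideal.Quotient.eq_zero_iff_mem.mpr hr]
    have hI : I ≤ p.asIdeal.comap (Ideal.Quotient.mk J) :=
      h.trans ((Ideal.IsPrime.radical_le_iff (Ideal.IsPrime.comap _)).mpr hJ)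
    exact Ideal.map_isPrime_of_surjective Ideal.Quotient.mk_surjective
      (by rwa [Ideal.mk_ker])
  let f : PrimeSpectrum (R ⧸ J) → PrimeSpectrum (R ⧸ I) := fun p =>
    ⟨_, key p⟩
  have hcomap : ∀ p : PrimeSpectrum (R ⧸ J),
      I ≤ p.asIdeal.comap (Ideal.Quotient.mk J) := by
    intro p
    refine h.trans ((Ideal.IsPrime.radical_le_iff (Ideal.IsPrime.comap _)).mpr ?_)
    intro r hr
    simp [Ideal.mem_comap, Ideal.Quotient.eq_zero_iff_mem.mpr hr]
  have hf : StrictMono f := by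
    intro p q hpq
    have hle : f p ≤ f q := Ideal.map_mono (Ideal.comap_mono hpq.le)
    refine lt_of_le_of_ne hle (fun he => ?_)
    have := congrArg (fun s : PrimeSpectrum (R ⧸ I) =>
      s.asIdeal.comap (Ideal.Quotient.mk I)) he
    simp only [f, Ideal.comap_map_of_surjective _ Ideal.Quotient.mk_surjective,
      ← RingHom.ker_eq_comap_bot, Ideal.mk_ker] at this
    rw [sup_eq_left.mpr (hcomap p), sup_eq_left.mpr (hcomap q)] at this
    have : p.asIdeal = q.asIdeal :=
      Ideal.comap_injective_of_surjective _ Ideal.Quotient.mk_surjective this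
    exact hpq.ne (PrimeSpectrum.ext this)
  exact Order.krullDim_le_of_strictMono f hf

/-- If `x` is a parameter element of `M` contained in `Ann U_M(0)`, then
`U_M(0) = 0 :_M x`. -/
theorem stmt1 {R : Type} [CommRing R] [IsLocalRing R] [IsNoetherianRing R]
    (M : Type) [AddCommGroup M] [Module R M] [Module.Finite R M]
    (d : ℕ) (hd : 0 < d) (hdim : moduleDim R M = (d : WithBot ℕ∞))
    (U : Submodule R M) (hU : IsUnmixedComponent d U)
    (x : R) (hx : IsParamElt d M x) (hxa : x ∈ Module.annihilator R ↥U) :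
    U = LinearMap.ker (LinearMap.lsmul R M x) := by
  set K := LinearMap.ker (LinearMap.lsmul R M x) with hKdef
  have hUK : U ≤ K := by
    intro m hm
    have h0 := Module.mem_annihilator.mp hxa ⟨m, hm⟩
    have : x • m = 0 := by
      simpa [Subtype.ext_iff] using h0
    simpa [hKdef, LinearMap.mem_ker] using this
  refine le_antisymm hUK (hU.2 K ?_)
  have hfinK : Module.Finite R ↥K := Module.Finite.iff_fg.mpr (IsNoetherian.noetherian K)
  have hAnnM : Module.annihilator R M ≤ Module.annihilator R ↥K := fun a haM =>
    Module.mem_annihilator.mpr fun u =>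
      Subtype.ext (by simpa using Module.mem_annihilator.mp haM (u : M))
  have hxK : x ∈ Module.annihilator R ↥K := by
    refine Module.mem_annihilator.mpr fun u => Subtype.ext ?_
    have : x • (u : M) = 0 := u.2
    simpa [hKdef, LinearMap.mem_ker] using this
  have hsup : Ideal.span {x} ⊔ Module.annihilator R M ≤ Module.annihilator R ↥K :=
    sup_le (by rwa [Ideal.span_le, Set.singleton_subset_iff]) hAnnM
  have h1 : Module.annihilator R (M ⧸ (Ideal.span {x} • ⊤ : Submodule R M)) ≤
      (Module.annihilator R ↥K).radical :=
    (ann_quot_le_radical _).trans (Ideal.radical_mono hsup)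
  have h2 : moduleDim R ↥K ≤ moduleDim R (M ⧸ (Ideal.span {x} • ⊤ : Submodule R M)) :=
    ringKrullDim_quot_le_quot_of_le_radical h1
  rw [hx.2] at h2
  exact lt_of_le_of_lt h2 (by exact_mod_cast Nat.sub_lt hd one_pos)
end

section
/- Let (R,m) be a Noetherian local ring, M a finitely generated R-module of dimension d > 0, and x a parameter element of M. Then b(M) ⊆ b(M/xM), where b(N) denotes the intersection over all systems of parameters y_1,...,y_s of N and all i ≤ s of Ann((y_1,...,y_{i-1})N : y_i)/((y_1,...,y_{i-1})N). -/
open Submodule IsLocalRing Classical CategoryTheory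

section Aux

variable {R : Type} [CommRing R]

lemma annEq {N N' : Type} [AddCommGroup N] [Module R N] [AddCommGroup N'] [Module R N']
    (e : N ≃ₗ[R] N') : Module.annihilator R N = Module.annihilator R N' := by
  ext a
  simp only [Module.mem_annihilator]
  constructor
  · intro h m
    rw [← e.apply_symm_apply m, ← map_smul, h, map_zero]
  · intro h m
    rw [← e.symm_apply_apply m, ← map_smul, h, map_zero]

lemma dimEq {N N' : Type} [AddCommGroup N] [Module R N] [AddCommGroup N'] [Module R N']
    (e : N ≃ₗ[R] N') : moduleDim R N = moduleDim R N' := by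
  unfold moduleDim
  rw [annEq e]

/-- Kernels of scalar multiplication correspond under a linear equivalence. -/
noncomputable def kerEquiv {N N' : Type} [AddCommGroup N] [Module R N] [AddCommGroup N']
    [Module R N'] (e : N ≃ₗ[R] N') (a : R) :
    ↥(LinearMap.ker (LinearMap.lsmul R N a)) ≃ₗ[R]
      ↥(LinearMap.ker (LinearMap.lsmul R N' a)) := by
  have h : (LinearMap.ker (LinearMap.lsmul R N a)).map (e : N →ₗ[R] N')
      = LinearMap.ker (LinearMap.lsmul R N' a) := by
    ext m
    simp only [Submodule.mem_map, LinearMap.mem_ker, LinearMap.lsmul_apply]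
    constructor
    · rintro ⟨m', hm', rfl⟩
      rw [LinearEquiv.coe_coe, ← map_smul, hm', map_zero]
    · intro hm
      refine ⟨e.symm m, ?_, e.apply_symm_apply m⟩
      rw [← map_smul, hm, map_zero]
  exact (e.submoduleMap _).trans (LinearEquiv.ofEq _ _ h)

/-- Third isomorphism theorem in the form we need. -/
noncomputable def quotQuotEquiv (M : Type) [AddCommGroup M] [Module R M] (x : R) (A : Set R) :
    ((M ⧸ (Ideal.span {x} • ⊤ : Submodule R M)) ⧸
        (Ideal.span A • ⊤ :
          Submodule R (M ⧸ (Ideal.span {x} • ⊤ : Submodule R M))))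
      ≃ₗ[R] (M ⧸ (Ideal.span (insert x A) • ⊤ : Submodule R M)) := by
  set S : Submodule R M := Ideal.span {x} • ⊤ with hS
  set T : Submodule R M := Ideal.span (insert x A) • ⊤ with hT
  have hST : S ≤ T :=
    Submodule.smul_mono (Ideal.span_mono (Set.singleton_subset_iff.mpr (Set.mem_insert x A)))
      le_rfl
  have hbot : (Ideal.span {x} • ⊤ : Submodule R (M ⧸ S)) = ⊥ := by
    rw [eq_bot_iff]
    refine Submodule.smul_le.mpr ?_
    intro r hr m _
    obtain ⟨c, rfl⟩ := Ideal.mem_span_singleton'.mp hr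
    obtain ⟨m', rfl⟩ := Submodule.mkQ_surjective S m
    have : x • (m' : M) ∈ S := by
      rw [hS]
      exact Submodule.smul_mem_smul (Ideal.subset_span rfl) Submodule.mem_top
    refine Submodule.mem_bot R |>.mpr ?_
    refine (Submodule.Quotient.mk_eq_zero S).mpr ?_
    show (c * x) • m' ∈ S
    rw [mul_smul]
    exact S.smul_mem c this
  have hmap : T.map S.mkQ = (Ideal.span A • ⊤ : Submodule R (M ⧸ S)) := by
    rw [hT, Submodule.map_smul'', Submodule.map_top, Submodule.range_mkQ, Ideal.span_insert,
      Submodule.sup_smul, hbot, bot_sup_eq]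
  exact (Submodule.quotEquivOfEq _ _ hmap.symm).trans
    (Submodule.quotientQuotientEquivQuotient S T hST)

lemma cons_image_lt {n : ℕ} (x : R) (y : Fin n → R) (i : Fin n) :
    (Fin.cons x y : Fin (n + 1) → R) '' {j | j < i.succ} = insert x (y '' {j | j < i}) := by
  ext r
  simp only [Set.mem_image, Set.mem_setOf_eq, Set.mem_insert_iff]
  constructor
  · rintro ⟨j, hj, rfl⟩
    induction j using Fin.cases with
    | zero => exact Or.inl (by simp)
    | succ k =>
      exact Or.inr ⟨k, Fin.succ_lt_succ_iff.mp hj, by simp⟩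
  · rintro (rfl | ⟨k, hk, rfl⟩)
    · exact ⟨0, i.succ_pos, by simp⟩
    · exact ⟨k.succ, Fin.succ_lt_succ_iff.mpr hk, by simp⟩

end Aux

/-- For a parameter element `x` of `M`, one has `b(M) ⊆ b(M/xM)`. -/
theorem stmt3 {R : Type} [CommRing R] [IsLocalRing R] [IsNoetherianRing R]
    (M : Type) [AddCommGroup M] [Module R M] [Module.Finite R M]
    (d : ℕ) (hd : 0 < d) (hdim : moduleDim R M = (d : WithBot ℕ∞))
    (x : R) (hx : IsParamElt d M x) :
    bIdeal R M d ≤ bIdeal R (M ⧸ (Ideal.span {x} • ⊤ : Submodule R M)) (d - 1) := by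
  obtain ⟨n, rfl⟩ : ∃ n, d = n + 1 := ⟨d - 1, (Nat.succ_pred_eq_of_pos hd).symm⟩
  simp only [Nat.add_sub_cancel]
  refine le_iInf fun y => le_iInf fun hy => le_iInf fun i => ?_
  set z : Fin (n + 1) → R := Fin.cons x y with hzdef
  have hz : IsSOP M z := by
    constructor
    · intro j
      induction j using Fin.cases with
      | zero => simpa [hzdef] using hx.1
      | succ k => simpa [hzdef] using hy.1 k
    · have hrange : Set.range z = insert x (Set.range y) := Fin.range_cons x y
      have e := (quotQuotEquiv M x (Set.range y)).symm
      rw [hrange, dimEq e]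
      exact hy.2
  have key : bIdeal R M (n + 1) ≤
      Module.annihilator R
        ↥(LinearMap.ker (LinearMap.lsmul R
          (M ⧸ (Ideal.span (z '' {j | j < i.succ}) • ⊤ : Submodule R M)) (z i.succ))) :=
    iInf_le_of_le z (iInf_le_of_le hz (iInf_le _ i.succ))
  refine key.trans (le_of_eq ?_)
  have hset : z '' {j | j < i.succ} = insert x (y '' {j | j < i}) := cons_image_lt x y i
  have hzi : z i.succ = y i := by simp [hzdef]
  rw [hset, hzi]
  exact annEq (kerEquiv (quotQuotEquiv M x (y '' {j | j < i})).symm (y i))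
end

section
/- Let (R,m) be a Noetherian local ring and M a finitely generated R-module of dimension d > 0. Then the ideal b(M) annihilates the unmixed component U_M(0), i.e., b(M) ⊆ Ann_R(U_M(0)). -/
open Submodule IsLocalRing Classical CategoryTheory

section Aux

variable {R : Type} [CommRing R]

lemma aux_chain_le (K : Ideal R) (c : LTSeries (PrimeSpectrum R))
    (hc : K ≤ c.head.asIdeal) :
    (c.length : WithBot ℕ∞) ≤ ringKrullDim (R ⧸ K) := by
  have hKi : ∀ i, K ≤ (c i).asIdeal := fun i =>
    le_trans hc (c.monotone (Fin.zero_le i))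
  have hker : ∀ i, RingHom.ker (Ideal.Quotient.mk K) ≤ (c i).asIdeal := by
    intro i; rw [Ideal.mk_ker]; exact hKi i
  have hprime : ∀ i, Ideal.IsPrime (Ideal.map (Ideal.Quotient.mk K) (c i).asIdeal) := by
    intro i
    have := (c i).isPrime
    exact Ideal.map_isPrime_of_surjective Ideal.Quotient.mk_surjective (hker i)
  let f : Fin (c.length + 1) → PrimeSpectrum (R ⧸ K) := fun i =>
    ⟨Ideal.map (Ideal.Quotient.mk K) (c i).asIdeal, hprime i⟩
  have hcomap : ∀ i, Ideal.comap (Ideal.Quotient.mk K) (f i).asIdeal = (c i).asIdeal := by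
    intro i
    rw [Ideal.comap_map_of_surjective _ Ideal.Quotient.mk_surjective,
      ← RingHom.ker_eq_comap_bot, Ideal.mk_ker]
    exact sup_eq_left.mpr (hKi i)
  have hmono : StrictMono f := by
    intro i j hij
    have h1 : (c i).asIdeal < (c j).asIdeal := c.strictMono hij
    rw [← PrimeSpectrum.asIdeal_lt_asIdeal]
    refine lt_of_le_of_ne (Ideal.map_mono h1.le) (fun h => h1.ne ?_)
    rw [← hcomap i, ← hcomap j]
    exact congrArg _ h
  have := Order.LTSeries.length_le_krullDim (LTSeries.mk c.length f hmono)
  exact this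

lemma aux_dim_le (K : Ideal R) (n : ℕ)
    (h : ∀ c : LTSeries (PrimeSpectrum R), K ≤ c.head.asIdeal → c.length ≤ n) :
    ringKrullDim (R ⧸ K) ≤ ((n : ℕ) : WithBot ℕ∞) := by
  have hg : StrictMono (fun p : PrimeSpectrum (R ⧸ K) =>
      (⟨Ideal.comap (Ideal.Quotient.mk K) p.asIdeal, inferInstance⟩ : PrimeSpectrum R)) := by
    refine Monotone.strictMono_of_injective ?_ ?_
    · intro a b hab
      rw [← PrimeSpectrum.asIdeal_le_asIdeal]
      exact Ideal.comap_mono hab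
    · intro a b hab
      ext1
      exact Ideal.comap_injective_of_surjective _ Ideal.Quotient.mk_surjective
        (congrArg PrimeSpectrum.asIdeal hab)
  rw [ringKrullDim]
  unfold Order.krullDim
  refine iSup_le fun c => ?_
  have hhead : K ≤ ((c.map _ hg).head).asIdeal := by
    rw [LTSeries.head_map]
    intro a ha
    simp only [Ideal.mem_comap]
    exact (Ideal.Quotient.eq_zero_iff_mem.mpr ha) ▸ (c.head.asIdeal.zero_mem)
  have := h (c.map _ hg) hhead
  have hlen : (c.map _ hg).length = c.length := rfl
  rw [hlen] at this
  exact_mod_cast this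

end Aux

section Aux2

variable {R : Type} [CommRing R]

lemma aux_minimalPrimes_finite [IsNoetherianRing R] (I : Ideal R) :
    I.minimalPrimes.Finite := by
  rw [Ideal.minimalPrimes_eq_comap]
  exact (minimalPrimes.finite_of_isNoetherianRing (R ⧸ I)).image _

lemma aux_step [IsNoetherianRing R] (I J : Ideal R) (n : ℕ)
    (hI : ∀ c : LTSeries (PrimeSpectrum R), I ≤ c.head.asIdeal → c.length ≤ n + 1)
    (hJ : ∀ p ∈ I.minimalPrimes,
      ¬ (∀ c : LTSeries (PrimeSpectrum R), p ≤ c.head.asIdeal → c.length ≤ n) → ¬ J ≤ p) :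
    ∃ x ∈ J, ∀ c : LTSeries (PrimeSpectrum R),
      I ⊔ Ideal.span {x} ≤ c.head.asIdeal → c.length ≤ n := by
  classical
  set S : Set (Ideal R) := {p ∈ I.minimalPrimes |
    ¬ (∀ c : LTSeries (PrimeSpectrum R), p ≤ c.head.asIdeal → c.length ≤ n)} with hS
  have hfin : S.Finite := (aux_minimalPrimes_finite I).subset (Set.sep_subset _ _)
  have hprimes : ∀ p ∈ hfin.toFinset, p ≠ (⊤ : Ideal R) → p ≠ (⊤ : Ideal R) →
      Ideal.IsPrime (id p) := by
    intro p hp _ _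
    exact (hfin.mem_toFinset.mp hp).1.1.1
  have hiff := Ideal.subset_union_prime (R := R) (ι := Ideal R) (s := hfin.toFinset)
    (f := id) ⊤ ⊤ hprimes (I := J)
  have hnot : ¬ ∃ p ∈ hfin.toFinset, J ≤ id p := by
    rintro ⟨p, hp, hle⟩
    have hpS := hfin.mem_toFinset.mp hp
    exact hJ p hpS.1 hpS.2 hle
  obtain ⟨x, hxJ, hxn⟩ := Set.not_subset.mp (fun hsub => hnot (hiff.mp hsub))
  have hxp : ∀ p ∈ S, x ∉ p := by
    intro p hp hxp
    exact hxn (Set.mem_biUnion (hfin.mem_toFinset.mpr hp) hxp)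
  refine ⟨x, hxJ, ?_⟩
  intro c hc
  haveI : c.head.asIdeal.IsPrime := c.head.isPrime
  obtain ⟨p, hpmin, hple⟩ := Ideal.exists_minimalPrimes_le (le_trans le_sup_left hc)
  by_cases hp : ∀ c' : LTSeries (PrimeSpectrum R), p ≤ c'.head.asIdeal → c'.length ≤ n
  · exact hp c hple
  · have hpS : p ∈ S := ⟨hpmin, hp⟩
    have hxhead : x ∈ c.head.asIdeal :=
      hc (le_sup_right (a := I) (Ideal.mem_span_singleton_self x))
    have hprime : p.IsPrime := hpmin.1.1
    have hne : (⟨p, hprime⟩ : PrimeSpectrum R) ≠ c.head := by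
      intro h
      apply hxp p hpS
      have hpe : p = c.head.asIdeal := congrArg PrimeSpectrum.asIdeal h
      rw [hpe]; exact hxhead
    have hlt : (⟨p, hprime⟩ : PrimeSpectrum R) < c.head :=
      lt_of_le_of_ne ((PrimeSpectrum.asIdeal_le_asIdeal _ _).mp hple) hne
    have hcons := hI (c.cons ⟨p, hprime⟩ hlt)
      (by rw [RelSeries.head_cons]; exact hpmin.1.2)
    rw [RelSeries.cons_length] at hcons
    omega

lemma aux_iter [IsLocalRing R] [IsNoetherianRing R] (n : ℕ) (I : Ideal R)
    (hI : ∀ c : LTSeries (PrimeSpectrum R), I ≤ c.head.asIdeal → c.length ≤ n) :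
    ∃ y : Fin n → R, (∀ i, y i ∈ maximalIdeal R) ∧
      ∀ c : LTSeries (PrimeSpectrum R),
        I ⊔ Ideal.span (Set.range y) ≤ c.head.asIdeal → c.length ≤ 0 := by
  induction n generalizing I with
  | zero =>
    refine ⟨fun i => i.elim0, fun i => i.elim0, ?_⟩
    intro c hc
    apply hI c
    refine le_trans ?_ hc
    exact le_sup_left
  | succ n ih =>
    have hJ : ∀ p ∈ I.minimalPrimes,
        ¬ (∀ c : LTSeries (PrimeSpectrum R), p ≤ c.head.asIdeal → c.length ≤ n) →
        ¬ maximalIdeal R ≤ p := by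
      intro p hpmin hbad hmp
      apply hbad
      have hpm : p = maximalIdeal R :=
        le_antisymm (IsLocalRing.le_maximalIdeal hpmin.1.1.ne_top) hmp
      subst hpm
      intro c hc
      by_contra hlen
      push_neg at hlen
      have h1 : (1 : ℕ) < c.length + 1 := by omega
      have hlt : c 0 < c ⟨1, h1⟩ := c.strictMono (by simp [Fin.lt_def])
      have e0 : (c 0).asIdeal = maximalIdeal R :=
        le_antisymm (IsLocalRing.le_maximalIdeal (c 0).isPrime.ne_top) hc
      have e1 : (c ⟨1, h1⟩).asIdeal = maximalIdeal R :=
        le_antisymm (IsLocalRing.le_maximalIdeal (c ⟨1, h1⟩).isPrime.ne_top)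
          (le_trans hc ((PrimeSpectrum.asIdeal_le_asIdeal _ _).mpr
            (c.monotone (Fin.zero_le _))))
      exact hlt.ne (PrimeSpectrum.ext (e0.trans e1.symm))
    obtain ⟨x, hxm, hx⟩ := aux_step I (maximalIdeal R) n hI hJ
    obtain ⟨y, hy1, hy2⟩ := ih (I ⊔ Ideal.span {x}) hx
    refine ⟨Fin.cons x y, ?_, ?_⟩
    · intro i
      induction i using Fin.cases with
      | zero => simpa using hxm
      | succ j => simpa using hy1 j
    · intro c hc
      apply hy2 c
      rwa [Fin.range_cons, Ideal.span_insert, ← sup_assoc] at hc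

end Aux2

/-- The ideal `b(M)` annihilates the unmixed component `U_M(0)`. -/

theorem stmt4 {R : Type} [CommRing R] [IsLocalRing R] [IsNoetherianRing R]
    (M : Type) [AddCommGroup M] [Module R M] [Module.Finite R M]
    (d : ℕ) (hd : 0 < d) (hdim : moduleDim R M = (d : WithBot ℕ∞))
    (U : Submodule R M) (hU : IsUnmixedComponent d U) :
    bIdeal R M d ≤ Module.annihilator R ↥U := by
  classical
  by_cases hUbot : U = ⊥
  · subst hUbot
    intro r _
    refine Module.mem_annihilator.mpr fun m => ?_
    have hm : (m : M) = 0 := (Submodule.mem_bot R).mp m.2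
    apply Subtype.ext
    rw [SetLike.val_smul, hm, smul_zero]
    rfl
  · set J : Ideal R := Module.annihilator R ↥U with hJdef
    have hJne : J ≠ ⊤ := by
      intro h
      apply hUbot
      rw [eq_bot_iff]
      intro u hu
      have h1 : (1 : R) ∈ J := h ▸ Submodule.mem_top
      have h2 := Module.mem_annihilator.mp h1 (⟨u, hu⟩ : ↥U)
      have h3 := congrArg Subtype.val h2
      simp only [SetLike.val_smul, one_smul] at h3
      rw [h3]; simp
    have hJm : J ≤ maximalIdeal R := IsLocalRing.le_maximalIdeal hJne
    set A : Ideal R := Module.annihilator R M with hAdef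
    have hdim' : ringKrullDim (R ⧸ A) = ((d : ℕ) : WithBot ℕ∞) := hdim
    have hI : ∀ c : LTSeries (PrimeSpectrum R), A ≤ c.head.asIdeal → c.length ≤ d := by
      intro c hc
      have h3 := aux_chain_le A c hc
      rw [hdim'] at h3
      exact_mod_cast h3
    obtain ⟨e, rfl⟩ : ∃ e, d = e + 1 := ⟨d - 1, by omega⟩
    have hJcond : ∀ p ∈ A.minimalPrimes,
        ¬ (∀ c : LTSeries (PrimeSpectrum R), p ≤ c.head.asIdeal → c.length ≤ e) →
        ¬ J ≤ p := by
      intro p hpmin hbad hJp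
      apply hbad
      intro c hc
      have h1 := aux_chain_le J c (le_trans hJp hc)
      have h2 : ringKrullDim (R ⧸ J) < (((e + 1 : ℕ) : ℕ) : WithBot ℕ∞) := hU.1
      have h3 : ((c.length : ℕ) : WithBot ℕ∞) < (((e + 1 : ℕ) : ℕ) : WithBot ℕ∞) :=
        lt_of_le_of_lt h1 h2
      have h4 : c.length < e + 1 := by exact_mod_cast h3
      omega
    obtain ⟨x0, hx0J, hx0⟩ := aux_step A J e hI hJcond
    obtain ⟨y, hy1, hy2⟩ := aux_iter e (A ⊔ Ideal.span {x0}) hx0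
    set x : Fin (e + 1) → R := Fin.cons x0 y with hxdef
    have hrange : A ⊔ Ideal.span (Set.range x)
        = (A ⊔ Ideal.span {x0}) ⊔ Ideal.span (Set.range y) := by
      rw [hxdef, Fin.range_cons, Ideal.span_insert, sup_assoc]
    have hSOP : IsSOP M x := by
      refine ⟨?_, ?_⟩
      · intro i
        induction i using Fin.cases with
        | zero => simpa [hxdef] using hJm hx0J
        | succ j => simpa [hxdef] using hy1 j
      · have h0 : ∀ c : LTSeries (PrimeSpectrum R),
            A ⊔ Ideal.span (Set.range x) ≤ c.head.asIdeal → c.length ≤ 0 := by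
          intro c hc
          exact hy2 c (by rwa [← hrange])
        have hdimK := aux_dim_le (A ⊔ Ideal.span (Set.range x)) 0 h0
        have hann : A ⊔ Ideal.span (Set.range x) ≤
            Module.annihilator R (M ⧸ (Ideal.span (Set.range x) • ⊤ : Submodule R M)) := by
          refine sup_le ?_ ?_
          · intro r hr
            refine Module.mem_annihilator.mpr fun m => ?_
            obtain ⟨m, rfl⟩ := Submodule.Quotient.mk_surjective _ m
            rw [← Submodule.Quotient.mk_smul, Module.mem_annihilator.mp hr m]
            rfl
          · intro r hr
            refine Module.mem_annihilator.mpr fun m => ?_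
            obtain ⟨m, rfl⟩ := Submodule.Quotient.mk_surjective _ m
            rw [← Submodule.Quotient.mk_smul]
            exact (Submodule.Quotient.mk_eq_zero _).mpr
              (Submodule.smul_mem_smul hr Submodule.mem_top)
        have hsurj : Function.Surjective (Ideal.Quotient.factor hann) := by
          intro z
          obtain ⟨r, rfl⟩ := Ideal.Quotient.mk_surjective z
          exact ⟨Ideal.Quotient.mk _ r, by simp [Ideal.Quotient.factor]⟩
        have hle := ringKrullDim_le_of_surjective _ hsurj
        calc moduleDim R (M ⧸ (Ideal.span (Set.range x) • ⊤ : Submodule R M))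
            ≤ ringKrullDim (R ⧸ (A ⊔ Ideal.span (Set.range x))) := hle
          _ ≤ ((0 : ℕ) : WithBot ℕ∞) := hdimK
          _ = 0 := by norm_cast
    intro r hr
    unfold bIdeal at hr
    simp only [Submodule.mem_iInf] at hr
    have hrK := hr x hSOP (0 : Fin (e + 1))
    refine Module.mem_annihilator.mpr fun u => ?_
    have hx00 : x 0 = x0 := by simp [hxdef]
    have hu0 : x 0 • (u : M) = 0 := by
      have h1 := Module.mem_annihilator.mp hx0J u
      have h2 := congrArg Subtype.val h1
      rw [hx00]
      simpa using h2
    have hmem : Submodule.Quotient.mk (p := (Ideal.span (x '' {j | j < (0 : Fin (e + 1))}) • ⊤ :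
        Submodule R M)) (u : M) ∈ LinearMap.ker (LinearMap.lsmul R
          (M ⧸ (Ideal.span (x '' {j | j < (0 : Fin (e + 1))}) • ⊤ : Submodule R M)) (x 0)) := by
      rw [LinearMap.mem_ker, LinearMap.lsmul_apply, ← Submodule.Quotient.mk_smul, hu0]
      rfl
    have happ := Module.mem_annihilator.mp hrK ⟨_, hmem⟩
    have happ' := congrArg Subtype.val happ
    simp only [SetLike.val_smul, ZeroMemClass.coe_zero] at happ'
    have hz : r • (u : M) ∈ (Ideal.span (x '' {j | j < (0 : Fin (e + 1))}) • ⊤ :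
        Submodule R M) := by
      rw [← Submodule.Quotient.mk_eq_zero, Submodule.Quotient.mk_smul]
      exact happ'
    have hempty : (Ideal.span (x '' {j | j < (0 : Fin (e + 1))}) • ⊤ : Submodule R M) = ⊥ := by
      have hset : {j : Fin (e + 1) | j < 0} = ∅ := by
        ext j; simp
      rw [hset, Set.image_empty, Ideal.span_empty, Submodule.bot_smul]
    rw [hempty] at hz
    apply Subtype.ext
    simpa using hz
end
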